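/- arXiv:1811.05226 — 2 statements merged into one kernel-verified Lean document; each statement's English description precedes it below -/
import Mathlib

section
/- Let U be a block matrix U = [[A, C],[B, D]] (with square blocks of equal size n) satisfying U†ΓU = Γ where Γ = diag(1_n, -1_n). Then A is invertible, and setting Z = BA⁻¹, one has 1_n - Z†Z = (AA†)⁻¹; in particular 1_n - Z†Z is positive definite. -/
open Matrix ComplexOrder

lemma aux_posDef_conjTranspose_mul_self {n : ℕ} {A : Matrix (Fin n) (Fin n) ℂ}
    (hA : IsUnit A) : (Aᴴ * A).PosDef := by
  refine Matrix.PosDef.of_dotProduct_mulVec_pos (Matrix.isHermitian_conjTranspose_mul_self _) fun x hx => ?_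
  rw [← Matrix.mulVec_mulVec, Matrix.dotProduct_mulVec, Matrix.vecMul_conjTranspose, star_star]
  refine Matrix.dotProduct_star_self_pos_iff.mpr ?_
  intro h
  exact hx <| (Matrix.mulVec_injective_iff_isUnit.mpr hA) (h.trans (Matrix.mulVec_zero A).symm)

theorem block_pseudo_unitary_cartan {n : ℕ}
    (A B C D : Matrix (Fin n) (Fin n) ℂ)
    (hU : (fromBlocks A C B D)ᴴ * (fromBlocks (1 : Matrix (Fin n) (Fin n) ℂ) 0 0 (-1)) *
            (fromBlocks A C B D)
          = fromBlocks (1 : Matrix (Fin n) (Fin n) ℂ) 0 0 (-1)) :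
    IsUnit A ∧
    (1 - (B * A⁻¹)ᴴ * (B * A⁻¹) = (A * Aᴴ)⁻¹) ∧
    (1 - (B * A⁻¹)ᴴ * (B * A⁻¹)).PosDef := by
  rw [fromBlocks_conjTranspose, fromBlocks_multiply, fromBlocks_multiply] at hU
  have h11 : Aᴴ * A - Bᴴ * B = 1 := by
    have := congrArg Matrix.toBlocks₁₁ hU
    simpa [Matrix.toBlocks_fromBlocks₁₁, Matrix.mul_neg, sub_eq_add_neg] using this
  clear hU
  have hAA : Aᴴ * A = 1 + Bᴴ * B := by rw [← h11]; abel
  have hpd : (Aᴴ * A).PosDef := by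
    rw [hAA]
    exact Matrix.PosDef.add_posSemidef Matrix.PosDef.one
      (Matrix.posSemidef_conjTranspose_mul_self B)
  have hAunit : IsUnit A := by
    have := hpd.isUnit
    rw [Matrix.isUnit_iff_isUnit_det] at this ⊢
    rw [Matrix.det_mul] at this
    exact isUnit_of_mul_isUnit_right this
  have hAdet : IsUnit A.det := (Matrix.isUnit_iff_isUnit_det A).mp hAunit
  have hAHdet : IsUnit Aᴴ.det := by rw [Matrix.det_conjTranspose]; exact hAdet.star
  have hAHunit : IsUnit Aᴴ := (Matrix.isUnit_iff_isUnit_det Aᴴ).mpr hAHdet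
  have hAinv : A * A⁻¹ = 1 := Matrix.mul_nonsing_inv A hAdet
  have hAHinv : Aᴴ⁻¹ * Aᴴ = 1 := Matrix.nonsing_inv_mul Aᴴ hAHdet
  have key : 1 - (B * A⁻¹)ᴴ * (B * A⁻¹) = (A * Aᴴ)⁻¹ := by
    rw [Matrix.mul_inv_rev, Matrix.conjTranspose_mul, Matrix.conjTranspose_nonsing_inv]
    have expand : 1 - Aᴴ⁻¹ * Bᴴ * (B * A⁻¹) = Aᴴ⁻¹ * (Aᴴ * A - Bᴴ * B) * A⁻¹ := by
      simp only [Matrix.mul_sub, Matrix.sub_mul, Matrix.mul_assoc]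
      rw [hAinv, Matrix.mul_one, hAHinv]
    rw [expand, h11, Matrix.mul_one]
  refine ⟨hAunit, key, ?_⟩
  rw [key]
  refine Matrix.PosDef.inv ?_
  have := aux_posDef_conjTranspose_mul_self hAHunit
  rwa [Matrix.conjTranspose_conjTranspose] at this
end

section
/- Let U = [[A,C],[B,D]] be pseudo-unitary with respect to Γ = diag(1_n,-1_n). Then U admits the factorization U = [[Δ₁, Z†Δ₂],[ZΔ₁, Δ₂]] · diag(V₁, V₂), where Z = BA⁻¹, Δ₁ = (AA†)^{1/2} = (1 - Z†Z)^{-1/2}, Δ₂ = (DD†)^{1/2} = (1 - ZZ†)^{-1/2}, V₁ = (AA†)^{-1/2}A, V₂ = (DD†)^{-1/2}D, and V₁, V₂ are unitary. -/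
open Matrix ComplexOrder

lemma posDef_of_sq_posDef {n : ℕ} {Δ M : Matrix (Fin n) (Fin n) ℂ}
    (hΔ : Δ.PosSemidef) (hM : M.PosDef) (h : Δ * Δ = M) : Δ.PosDef := by
  refine .of_dotProduct_mulVec_pos hΔ.1 fun x hx => ?_
  rcases (hΔ.dotProduct_mulVec_nonneg x).lt_or_eq with hlt | heq
  · exact hlt
  · exfalso
    have h0 : Δ *ᵥ x = 0 := (hΔ.dotProduct_mulVec_zero_iff x).mp heq.symm
    have hMx : M *ᵥ x = 0 := by rw [← h, ← mulVec_mulVec, h0, mulVec_zero]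
    exact (hM.dotProduct_mulVec_pos hx).ne' (by rw [hMx, dotProduct_zero])

section
open scoped MatrixOrder Matrix.Norms.L2Operator

noncomputable def psdSqrt {n : ℕ} {M : Matrix (Fin n) (Fin n) ℂ} (_ : M.PosSemidef) :
    Matrix (Fin n) (Fin n) ℂ := CFC.sqrt M

lemma psdSqrt_mul_self {n : ℕ} {M : Matrix (Fin n) (Fin n) ℂ} (h : M.PosSemidef) :
    psdSqrt h * psdSqrt h = M := CFC.sqrt_mul_sqrt_self M h.nonneg

lemma posSemidef_psdSqrt {n : ℕ} {M : Matrix (Fin n) (Fin n) ℂ} (h : M.PosSemidef) :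
    (psdSqrt h).PosSemidef := (CFC.sqrt_nonneg M).posSemidef

end

theorem iwasawa_factorization {n : ℕ}
    (A B C D : Matrix (Fin n) (Fin n) ℂ)
    (hU : (fromBlocks A C B D)ᴴ * (fromBlocks 1 0 0 (-1) : Matrix (Fin n ⊕ Fin n) (Fin n ⊕ Fin n) ℂ) *
            (fromBlocks A C B D)
          = (fromBlocks 1 0 0 (-1) : Matrix (Fin n ⊕ Fin n) (Fin n ⊕ Fin n) ℂ))
    (Z : Matrix (Fin n) (Fin n) ℂ) (hZ : Z = B * A⁻¹) :
    IsUnit A ∧ IsUnit D ∧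
    ∃ Δ₁ Δ₂ : Matrix (Fin n) (Fin n) ℂ,
      Δ₁.PosDef ∧ Δ₂.PosDef ∧
      Δ₁ * Δ₁ = A * Aᴴ ∧ Δ₂ * Δ₂ = D * Dᴴ ∧
      A * Aᴴ = (1 - Zᴴ * Z)⁻¹ ∧ D * Dᴴ = (1 - Z * Zᴴ)⁻¹ ∧
      (Δ₁⁻¹ * A)ᴴ * (Δ₁⁻¹ * A) = 1 ∧ (Δ₂⁻¹ * D)ᴴ * (Δ₂⁻¹ * D) = 1 ∧
      fromBlocks A C B D =
        fromBlocks Δ₁ (Zᴴ * Δ₂) (Z * Δ₁) Δ₂ * fromBlocks (Δ₁⁻¹ * A) 0 0 (Δ₂⁻¹ * D) := by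
  set Γ : Matrix (Fin n ⊕ Fin n) (Fin n ⊕ Fin n) ℂ := fromBlocks 1 0 0 (-1) with hΓdef
  set U : Matrix (Fin n ⊕ Fin n) (Fin n ⊕ Fin n) ℂ := fromBlocks A C B D with hUdef
  have hΓ2 : Γ * Γ = 1 := by
    rw [hΓdef, fromBlocks_multiply, ← fromBlocks_one]
    simp
  have h1 : (Γ * Uᴴ * Γ) * U = 1 := by
    rw [mul_assoc, mul_assoc, ← mul_assoc Uᴴ Γ U, hU, hΓ2]
  have h2 : U * (Γ * Uᴴ * Γ) = 1 := mul_eq_one_comm.mp h1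
  have hUΓUH : U * Γ * Uᴴ = Γ := by
    have h3 : U * (Γ * Uᴴ * Γ) * Γ = Γ := by rw [h2, one_mul]
    calc U * Γ * Uᴴ = U * Γ * Uᴴ * (Γ * Γ) := by rw [hΓ2, mul_one]
      _ = U * (Γ * Uᴴ * Γ) * Γ := by simp only [mul_assoc]
      _ = Γ := h3
  -- block equations
  have e11 := congrArg Matrix.toBlocks₁₁ hU
  have e12 := congrArg Matrix.toBlocks₁₂ hU
  have f11 := congrArg Matrix.toBlocks₁₁ hUΓUH
  have f22 := congrArg Matrix.toBlocks₂₂ hUΓUH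
  simp only [hUdef, hΓdef, fromBlocks_conjTranspose, fromBlocks_multiply, toBlocks_fromBlocks₁₁,
    toBlocks_fromBlocks₁₂, toBlocks_fromBlocks₂₂, Matrix.mul_one, Matrix.mul_zero,
    Matrix.zero_mul, Matrix.one_mul, Matrix.mul_neg, Matrix.neg_mul, add_zero,
    zero_add] at e11 e12 f11 f22
  -- e11 : Aᴴ * A + -(Bᴴ * B) = 1, e12 : Aᴴ * C + -(Bᴴ * D) = 0
  -- f11 : A * Aᴴ + -(C * Cᴴ) = 1, f22 : B * Bᴴ + -(D * Dᴴ) = -1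
  have eq1 : Aᴴ * A = 1 + Bᴴ * B := by rw [← e11]; abel
  have eq2 : Aᴴ * C = Bᴴ * D := by rw [← sub_eq_zero, sub_eq_add_neg]; exact e12
  have eq3 : A * Aᴴ = 1 + C * Cᴴ := by rw [← f11]; abel
  have eq4 : D * Dᴴ = 1 + B * Bᴴ := by
    have := congrArg Neg.neg f22
    rw [neg_neg] at this
    rw [← this]; abel
  -- positive definiteness and invertibility
  have hP1 : (A * Aᴴ).PosDef := eq3 ▸ (Matrix.PosDef.one.add_posSemidef (posSemidef_self_mul_conjTranspose C))
  have hP2 : (D * Dᴴ).PosDef := eq4 ▸ (Matrix.PosDef.one.add_posSemidef (posSemidef_self_mul_conjTranspose B))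
  have hdetA : IsUnit A.det := by
    have h := (isUnit_iff_isUnit_det _).mp hP1.isUnit
    rw [det_mul] at h
    exact isUnit_of_mul_isUnit_left h
  have hdetD : IsUnit D.det := by
    have h := (isUnit_iff_isUnit_det _).mp hP2.isUnit
    rw [det_mul] at h
    exact isUnit_of_mul_isUnit_left h
  have hdetAH : IsUnit Aᴴ.det := by rw [det_conjTranspose]; exact hdetA.star
  have hdetDH : IsUnit Dᴴ.det := by rw [det_conjTranspose]; exact hdetD.star
  refine ⟨(isUnit_iff_isUnit_det _).mpr hdetA, (isUnit_iff_isUnit_det _).mpr hdetD, ?_⟩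
  -- Z facts
  have hZA : Z * A = B := by rw [hZ, nonsing_inv_mul_cancel_right _ _ hdetA]
  have hZconj : Zᴴ = Aᴴ⁻¹ * Bᴴ := by rw [hZ, conjTranspose_mul, conjTranspose_nonsing_inv]
  have hBB : Bᴴ * B = Aᴴ * A - 1 := by rw [eq1]; abel
  have hZHD : Zᴴ * D = C := by
    rw [hZconj, mul_assoc, ← eq2, ← mul_assoc, nonsing_inv_mul _ hdetAH, one_mul]
  have hZHB : Zᴴ * B = A - Aᴴ⁻¹ := by
    rw [hZconj, mul_assoc, hBB, mul_sub, ← mul_assoc, nonsing_inv_mul _ hdetAH, one_mul, mul_one]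
  have key1 : (1 - Zᴴ * Z) * (A * Aᴴ) = 1 := by
    have h5 : Zᴴ * Z * (A * Aᴴ) = (A - Aᴴ⁻¹) * Aᴴ := by
      rw [mul_assoc Zᴴ Z, ← mul_assoc Z A, hZA, ← mul_assoc, hZHB]
    rw [sub_mul, one_mul, h5, sub_mul, nonsing_inv_mul _ hdetAH]
    abel
  have hAAH : A * Aᴴ = (1 - Zᴴ * Z)⁻¹ := (inv_eq_left_inv (mul_eq_one_comm.mp key1)).symm
  have s1 : (1 + B * Bᴴ) * B = B * (Aᴴ * A) := by rw [eq1]; noncomm_ring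
  have key2 : (D * Dᴴ) * (1 - Z * Zᴴ) = 1 := by
    have h5 : (D * Dᴴ) * (Z * Zᴴ) = B * Bᴴ := by
      calc (D * Dᴴ) * (Z * Zᴴ)
          = (1 + B * Bᴴ) * B * (A⁻¹ * (Aᴴ⁻¹ * Bᴴ)) := by
            rw [eq4, hZconj, hZ]; noncomm_ring
        _ = B * Aᴴ * (A * A⁻¹) * (Aᴴ⁻¹ * Bᴴ) := by rw [s1]; noncomm_ring
        _ = B * (Aᴴ * Aᴴ⁻¹) * Bᴴ := by rw [mul_nonsing_inv _ hdetA, mul_one]; noncomm_ring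
        _ = B * Bᴴ := by rw [mul_nonsing_inv _ hdetAH, mul_one]
    rw [mul_sub, mul_one, h5, eq4]
    abel
  have hDDH : D * Dᴴ = (1 - Z * Zᴴ)⁻¹ := (inv_eq_left_inv key2).symm
  -- square roots
  set Δ₁ : Matrix (Fin n) (Fin n) ℂ := psdSqrt hP1.posSemidef with hΔ₁def
  set Δ₂ : Matrix (Fin n) (Fin n) ℂ := psdSqrt hP2.posSemidef with hΔ₂def
  have hΔ₁sq : Δ₁ * Δ₁ = A * Aᴴ := psdSqrt_mul_self hP1.posSemidef
  have hΔ₂sq : Δ₂ * Δ₂ = D * Dᴴ := psdSqrt_mul_self hP2.posSemidef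
  have hΔ₁pd : Δ₁.PosDef := posDef_of_sq_posDef (posSemidef_psdSqrt hP1.posSemidef) hP1 hΔ₁sq
  have hΔ₂pd : Δ₂.PosDef := posDef_of_sq_posDef (posSemidef_psdSqrt hP2.posSemidef) hP2 hΔ₂sq
  have hdetΔ₁ : IsUnit Δ₁.det := (isUnit_iff_isUnit_det _).mp hΔ₁pd.isUnit
  have hdetΔ₂ : IsUnit Δ₂.det := (isUnit_iff_isUnit_det _).mp hΔ₂pd.isUnit
  have unit1 : (Δ₁⁻¹ * A)ᴴ * (Δ₁⁻¹ * A) = 1 := by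
    rw [conjTranspose_mul, conjTranspose_nonsing_inv, hΔ₁pd.isHermitian.eq]
    calc Aᴴ * Δ₁⁻¹ * (Δ₁⁻¹ * A) = Aᴴ * (Δ₁⁻¹ * Δ₁⁻¹) * A := by noncomm_ring
      _ = Aᴴ * (Δ₁ * Δ₁)⁻¹ * A := by rw [Matrix.mul_inv_rev]
      _ = Aᴴ * (Aᴴ⁻¹ * A⁻¹) * A := by rw [hΔ₁sq, Matrix.mul_inv_rev]
      _ = (Aᴴ * Aᴴ⁻¹) * (A⁻¹ * A) := by noncomm_ring
      _ = 1 := by rw [mul_nonsing_inv _ hdetAH, nonsing_inv_mul _ hdetA, one_mul]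
  have unit2 : (Δ₂⁻¹ * D)ᴴ * (Δ₂⁻¹ * D) = 1 := by
    rw [conjTranspose_mul, conjTranspose_nonsing_inv, hΔ₂pd.isHermitian.eq]
    calc Dᴴ * Δ₂⁻¹ * (Δ₂⁻¹ * D) = Dᴴ * (Δ₂⁻¹ * Δ₂⁻¹) * D := by noncomm_ring
      _ = Dᴴ * (Δ₂ * Δ₂)⁻¹ * D := by rw [Matrix.mul_inv_rev]
      _ = Dᴴ * (Dᴴ⁻¹ * D⁻¹) * D := by rw [hΔ₂sq, Matrix.mul_inv_rev]
      _ = (Dᴴ * Dᴴ⁻¹) * (D⁻¹ * D) := by noncomm_ring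
      _ = 1 := by rw [mul_nonsing_inv _ hdetDH, nonsing_inv_mul _ hdetD, one_mul]
  refine ⟨Δ₁, Δ₂, hΔ₁pd, hΔ₂pd, hΔ₁sq, hΔ₂sq, hAAH, hDDH, unit1, unit2, ?_⟩
  have b11 : Δ₁ * (Δ₁⁻¹ * A) + Zᴴ * Δ₂ * 0 = A := by
    rw [Matrix.mul_zero, add_zero, mul_nonsing_inv_cancel_left _ _ hdetΔ₁]
  have b12 : Δ₁ * 0 + Zᴴ * Δ₂ * (Δ₂⁻¹ * D) = C := by
    rw [Matrix.mul_zero, zero_add, mul_assoc, mul_nonsing_inv_cancel_left _ _ hdetΔ₂, hZHD]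
  have b21 : Z * Δ₁ * (Δ₁⁻¹ * A) + Δ₂ * 0 = B := by
    rw [Matrix.mul_zero, add_zero, mul_assoc, mul_nonsing_inv_cancel_left _ _ hdetΔ₁, hZA]
  have b22 : Z * Δ₁ * 0 + Δ₂ * (Δ₂⁻¹ * D) = D := by
    rw [Matrix.mul_zero, zero_add, mul_nonsing_inv_cancel_left _ _ hdetΔ₂]
  rw [hUdef, fromBlocks_multiply, b11, b12, b21, b22]
end
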